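/- Set u_1 := c_1 + (1/(2λ))‖x_1 − x_0‖² and t_1 := u_1 − 𝓛_1^λ(x_1). Then t_1 ≤ (c_1 − φ(x_1)) − (c_0 − f(x_0)) + ‖∇f(x_0) − s_0‖·‖x_1 − x_0‖ + (L/2)‖x_1 − x_0‖². -/

import Mathlib

open scoped RealInnerProductSpace

lemma descent_aux {d : ℕ} (f : EuclideanSpace ℝ (Fin d) → ℝ) (hf : Differentiable ℝ f)
    (L : ℝ) (hL : 0 ≤ L)
    (hLip : ∀ x y, ‖gradient f x - gradient f y‖ ≤ L * ‖x - y‖)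
    (x y : EuclideanSpace ℝ (Fin d)) :
    f y ≤ f x + ⟪gradient f x, y - x⟫ + L / 2 * ‖y - x‖ ^ 2 := by
  set v := y - x with hv
  have hpath : ∀ t : ℝ, HasDerivAt (fun t : ℝ => f (x + t • v))
      ⟪gradient f (x + t • v), v⟫ t := by
    intro t
    have h1 : HasDerivAt (fun t : ℝ => x + t • v) v t := by
      simpa using ((hasDerivAt_id t).smul_const v).const_add x
    have h2 := ((hf (x + t • v)).hasGradientAt).hasFDerivAt
    have h3 := h2.comp_hasDerivAt t h1
    simp at h3 ⊢
    exact h3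
  have hgradLip : LipschitzWith (Real.toNNReal L) (gradient f) := by
    refine LipschitzWith.of_dist_le_mul fun a b => ?_
    simpa [dist_eq_norm, Real.coe_toNNReal L hL] using hLip a b
  have hcont : Continuous fun t : ℝ => ⟪gradient f (x + t • v), v⟫ := by
    refine Continuous.inner ?_ continuous_const
    exact hgradLip.continuous.comp (by continuity)
  have hint : IntervalIntegrable (fun t : ℝ => ⟪gradient f (x + t • v), v⟫)
      MeasureTheory.volume 0 1 := hcont.intervalIntegrable 0 1
  have hFTC : f y - f x = ∫ t in (0:ℝ)..1, ⟪gradient f (x + t • v), v⟫ := by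
    have := intervalIntegral.integral_eq_sub_of_hasDerivAt
      (fun t _ => hpath t) hint
    rw [this]
    norm_num [hv]
  have hbound : ∀ t ∈ Set.Icc (0:ℝ) 1,
      ⟪gradient f (x + t • v), v⟫ ≤ ⟪gradient f x, v⟫ + L * t * ‖v‖ ^ 2 := by
    intro t ht
    have h1 : ⟪gradient f (x + t • v) - gradient f x, v⟫ ≤
        ‖gradient f (x + t • v) - gradient f x‖ * ‖v‖ := real_inner_le_norm _ _
    have h2 : ‖gradient f (x + t • v) - gradient f x‖ ≤ L * (t * ‖v‖) := by
      have := hLip (x + t • v) x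
      simpa [norm_smul, abs_of_nonneg ht.1] using this
    have h3 : ⟪gradient f (x + t • v) - gradient f x, v⟫ ≤ L * t * ‖v‖ ^ 2 := by
      calc _ ≤ ‖gradient f (x + t • v) - gradient f x‖ * ‖v‖ := h1
        _ ≤ L * (t * ‖v‖) * ‖v‖ := by
            apply mul_le_mul_of_nonneg_right h2 (norm_nonneg _)
        _ = L * t * ‖v‖ ^ 2 := by ring
    have h4 := inner_sub_left (𝕜 := ℝ) (gradient f (x + t • v)) (gradient f x) v
    linarith [h4.le, h4.symm.le]
  have hint2 : IntervalIntegrable (fun t : ℝ => L * t * ‖v‖ ^ 2)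
      MeasureTheory.volume 0 1 :=
    (((continuous_const.mul continuous_id).mul continuous_const)).intervalIntegrable 0 1
  have hmono : (∫ t in (0:ℝ)..1, ⟪gradient f (x + t • v), v⟫) ≤
      ∫ t in (0:ℝ)..1, (⟪gradient f x, v⟫ + L * t * ‖v‖ ^ 2) := by
    apply intervalIntegral.integral_mono_on (by norm_num) hint
    · exact intervalIntegrable_const.add hint2
    · exact hbound
  have hval : (∫ t in (0:ℝ)..1, (⟪gradient f x, v⟫ + L * t * ‖v‖ ^ 2)) =
      ⟪gradient f x, v⟫ + L / 2 * ‖v‖ ^ 2 := by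
    rw [intervalIntegral.integral_add intervalIntegrable_const hint2]
    have he : (fun t : ℝ => L * t * ‖v‖ ^ 2) = fun t : ℝ => (L * ‖v‖ ^ 2) * t := by
      funext t; ring
    rw [he, intervalIntegral.integral_const_mul, integral_id]
    simp
    ring
  linarith [hFTC, hmono, hval.le]

/-- With `𝓛_1(x) = c_0 + ⟨s_0, x - x_0⟩ + h(x)`,
`x_1` the minimizer of `𝓛_1^λ = 𝓛_1 + (1/(2λ))‖· - x_0‖²`,
`u_1 = c_1 + (1/(2λ))‖x_1 - x_0‖²` and `t_1 = u_1 - 𝓛_1^λ(x_1)`, one has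
`t_1 ≤ (c_1 - φ(x_1)) - (c_0 - f(x_0)) + ‖∇f(x_0) - s_0‖‖x_1 - x_0‖ + (L/2)‖x_1 - x_0‖²`. -/
theorem stmt_9 {d : ℕ} (f : EuclideanSpace ℝ (Fin d) → ℝ) (hf : Differentiable ℝ f)
    (L : ℝ) (hL : 0 < L)
    (hLip : ∀ x y, ‖gradient f x - gradient f y‖ ≤ L * ‖x - y‖)
    (s : Set (EuclideanSpace ℝ (Fin d))) (hs : s.Nonempty) (hcl : IsClosed s)
    (h : EuclideanSpace ℝ (Fin d) → ℝ) (hconv : ConvexOn ℝ s h)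
    (hlsc : LowerSemicontinuousOn h s)
    (lam : ℝ) (hlam : 0 < lam)
    (x0 : EuclideanSpace ℝ (Fin d)) (hx0 : x0 ∈ s)
    (c0 c1 : ℝ) (s0 : EuclideanSpace ℝ (Fin d))
    (x1 : EuclideanSpace ℝ (Fin d)) (hx1mem : x1 ∈ s)
    -- `x_1` minimizes `𝓛_1^λ`:
    (hx1min : ∀ y ∈ s,
      c0 + ⟪s0, x1 - x0⟫ + h x1 + 1 / (2 * lam) * ‖x1 - x0‖ ^ 2 ≤
        c0 + ⟪s0, y - x0⟫ + h y + 1 / (2 * lam) * ‖y - x0‖ ^ 2)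
    (u1 t1 : ℝ)
    (hu1 : u1 = c1 + 1 / (2 * lam) * ‖x1 - x0‖ ^ 2)
    (ht1 : t1 = u1 - (c0 + ⟪s0, x1 - x0⟫ + h x1 + 1 / (2 * lam) * ‖x1 - x0‖ ^ 2)) :
    t1 ≤ (c1 - (f x1 + h x1)) - (c0 - f x0) +
      ‖gradient f x0 - s0‖ * ‖x1 - x0‖ + L / 2 * ‖x1 - x0‖ ^ 2 := by
  have hdesc := descent_aux f hf L hL.le hLip x0 x1
  have hcs : ⟪gradient f x0 - s0, x1 - x0⟫ ≤ ‖gradient f x0 - s0‖ * ‖x1 - x0‖ :=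
    real_inner_le_norm _ _
  have hsub := inner_sub_left (𝕜 := ℝ) (gradient f x0) s0 (x1 - x0)
  subst hu1 ht1
  linarith [hsub.le, hsub.symm.le]
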